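/- If P(t) and Q(t) are reciprocal polynomials in k[t], then I_{P(t)} ∩ I_{Q(t)} = I_{lcm(P(t),Q(t))}, where I_{R(t)} denotes the set of elements of L^ω divisible by R(t) in L. -/

import Mathlib

open LaurentPolynomial

/-- A nonzero monic polynomial `P(t)` of degree `d` is reciprocal if
`P(t) = ± t^d P(t⁻¹)` (as Laurent polynomials). -/
def IsReciprocalPoly {k : Type*} [Field k] (P : Polynomial k) : Prop :=
  P.Monic ∧
    (P.toLaurent = T (P.natDegree : ℤ) * invert P.toLaurent ∨
      P.toLaurent = -(T (P.natDegree : ℤ) * invert P.toLaurent))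


lemma toLaurent_apply_nat {k : Type*} [CommRing k] (p : Polynomial k) (n : ℕ) :
    (p.toLaurent).coeff (n : ℤ) = p.coeff n := by
  rw [Polynomial.toLaurent_apply]
  exact Finsupp.mapDomain_apply Int.ofNat_injective p.toFinsupp.coeff n

lemma reciprocal_coeff_zero {k : Type*} [Field k] (P : Polynomial k)
    (hP : IsReciprocalPoly P) :
    P.coeff 0 ≠ 0 := by
  have h1 : ((T (P.natDegree : ℤ) * invert P.toLaurent : LaurentPolynomial k)).coeff (0 : ℤ) = 1 := by
    have hT : (T (P.natDegree : ℤ) : LaurentPolynomial k)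
        = AddMonoidAlgebra.single (P.natDegree : ℤ) (1:k) := rfl
    rw [hT, AddMonoidAlgebra.coeff_single_mul_apply]
    simp only [invert_apply, one_mul]
    have harg : (-(-(P.natDegree:ℤ) + 0)) = (P.natDegree : ℤ) := by ring
    rw [harg, toLaurent_apply_nat]
    exact hP.1
  have h0 : P.toLaurent.coeff (0 : ℤ) = P.coeff 0 := by
    simpa using toLaurent_apply_nat P 0
  rcases hP.2 with h | h
  · have h2 := congrArg (fun f : LaurentPolynomial k => f.coeff (0:ℤ)) h
    beta_reduce at h2
    rw [h0, h1] at h2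
    simp [h2]
  · have h2 := congrArg (fun f : LaurentPolynomial k => f.coeff (0:ℤ)) h
    beta_reduce at h2
    have hneg : ((-(T (P.natDegree : ℤ) * invert P.toLaurent) : LaurentPolynomial k)).coeff (0:ℤ)
        = -(((T (P.natDegree : ℤ) * invert P.toLaurent : LaurentPolynomial k)).coeff (0:ℤ)) := rfl
    rw [h0, hneg, h1] at h2
    simp [h2]

lemma dvd_of_toLaurent_dvd {k : Type*} [Field k] {P p : Polynomial k}
    (h0 : P.coeff 0 ≠ 0) (h : P.toLaurent ∣ p.toLaurent) : P ∣ p := by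
  obtain ⟨c, hc⟩ := h
  obtain ⟨m, q, hq⟩ := c.exists_T_pow
  have key : (Polynomial.X ^ m * p : Polynomial k) = P * q := by
    apply Polynomial.toLaurent_injective
    rw [map_mul, map_mul, Polynomial.toLaurent_X_pow, hq, T_mul, hc, mul_assoc]
  have hcop : IsCoprime P (Polynomial.X ^ m : Polynomial k) :=
    ((Polynomial.prime_X.coprime_iff_not_dvd.mpr
      (by rw [Polynomial.X_dvd_iff]; exact h0)).symm).pow_right
  exact hcop.dvd_of_dvd_mul_left ⟨q, key⟩

lemma laurent_lcm_dvd {k : Type*} [Field k] {P Q R : Polynomial k}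
    (hP0 : P.coeff 0 ≠ 0) (hQ0 : Q.coeff 0 ≠ 0)
    (hRlcm : ∀ S : Polynomial k, P ∣ S → Q ∣ S → R ∣ S)
    {a : LaurentPolynomial k} (ha : P.toLaurent ∣ a) (hb : Q.toLaurent ∣ a) :
    R.toLaurent ∣ a := by
  obtain ⟨n, p, hp⟩ := a.exists_T_pow
  have haT : a = p.toLaurent * T (-n : ℤ) := by
    rw [hp, mul_T_assoc]; simp
  have hPp : P ∣ p := dvd_of_toLaurent_dvd hP0 (hp ▸ ha.mul_right (T n))
  have hQp : Q ∣ p := dvd_of_toLaurent_dvd hQ0 (hp ▸ hb.mul_right (T n))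
  obtain ⟨s, hs⟩ := hRlcm p hPp hQp
  exact ⟨s.toLaurent * T (-n : ℤ), by rw [haT, hs, map_mul, mul_assoc]⟩

/-- If `P(t)` and `Q(t)` are reciprocal polynomials in `k[t]` and `R(t)` is their (monic)
least common multiple, then `I_{P(t)} ∩ I_{Q(t)} = I_{R(t)}`, where `I_{S(t)}` is the set
of elements of the fixed-point subalgebra `L^ω` of the sl₂-loop algebra `L` (axiomatized
as the free `k[t,t⁻¹]`-module on `e, f, h` with Chevalley involution `ω`) divisible by
`S(t)` in `L`. -/
theorem stmt_12 {k : Type*} [Field k] [IsAlgClosed k] [CharZero k]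
    {L : Type*} [LieRing L] [LieAlgebra k L]
    [Module (LaurentPolynomial k) L] [IsScalarTower k (LaurentPolynomial k) L]
    (e f h : L)
    (bas : Module.Basis (Fin 3) (LaurentPolynomial k) L)
    (hbas : bas 0 = e ∧ bas 1 = f ∧ bas 2 = h)
    (hsmul : ∀ (p : LaurentPolynomial k) (x y : L), ⁅p • x, y⁆ = p • ⁅x, y⁆)
    (hef : ⁅e, f⁆ = h) (hhe : ⁅h, e⁆ = (2 : k) • e) (hhf : ⁅h, f⁆ = -((2 : k) • f))
    (ω : L →ₗ[k] L)
    (hωsmul : ∀ (p : LaurentPolynomial k) (x : L), ω (p • x) = invert p • ω x)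
    (hωe : ω e = f) (hωf : ω f = e) (hωh : ω h = -h)
    (P Q : Polynomial k) (hP : IsReciprocalPoly P) (hQ : IsReciprocalPoly Q)
    (R : Polynomial k) (hRmonic : R.Monic)
    (hRdvd : P ∣ R ∧ Q ∣ R)
    (hRlcm : ∀ S : Polynomial k, P ∣ S → Q ∣ S → R ∣ S) :
    {x : L | ω x = x ∧ ∃ α : L, x = P.toLaurent • α} ∩
        {x : L | ω x = x ∧ ∃ α : L, x = Q.toLaurent • α} =
      {x : L | ω x = x ∧ ∃ α : L, x = R.toLaurent • α} := by
  have hP0 : P.coeff 0 ≠ 0 := reciprocal_coeff_zero P hP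
  have hQ0 : Q.coeff 0 ≠ 0 := reciprocal_coeff_zero Q hQ
  ext x
  simp only [Set.mem_inter_iff, Set.mem_setOf_eq]
  constructor
  · rintro ⟨⟨hωx, α, hα⟩, ⟨-, β, hβ⟩⟩
    refine ⟨hωx, ?_⟩
    have hdvd : ∀ i : Fin 3, R.toLaurent ∣ bas.repr x i := by
      intro i
      refine laurent_lcm_dvd hP0 hQ0 hRlcm ⟨bas.repr α i, ?_⟩ ⟨bas.repr β i, ?_⟩
      · rw [hα, map_smul, Finsupp.smul_apply, smul_eq_mul]
      · rw [hβ, map_smul, Finsupp.smul_apply, smul_eq_mul]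
    choose c hc using hdvd
    refine ⟨∑ i, c i • bas i, ?_⟩
    calc x = ∑ i, bas.repr x i • bas i := (bas.sum_repr x).symm
      _ = R.toLaurent • ∑ i, c i • bas i := by
          rw [Finset.smul_sum]
          refine Finset.sum_congr rfl fun i _ => ?_
          rw [hc i, mul_smul]
  · rintro ⟨hωx, α, hα⟩
    obtain ⟨S, hS⟩ := hRdvd.1
    obtain ⟨S', hS'⟩ := hRdvd.2
    exact ⟨⟨hωx, S.toLaurent • α, by rw [hα, hS, map_mul, mul_smul]⟩,
      ⟨hωx, S'.toLaurent • α, by rw [hα, hS', map_mul, mul_smul]⟩⟩
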